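/- Let f : {0,1}^n → {0,1} be λ-critical for some λ ≥ 1 with n ≥ λ. Then D_ave(f) ≤ n(1 − 1/λ) + 2√(n/λ). -/

import Mathlib

/-- Decision trees over `n` boolean variables. -/
inductive DTree (n : ℕ) : Type where
  | leaf : Bool → DTree n
  | node : Fin n → DTree n → DTree n → DTree n

namespace DTree

/-- Evaluate a decision tree on an input. -/
def eval {n : ℕ} : DTree n → (Fin n → Bool) → Bool
  | leaf b, _ => b
  | node i t0 t1, x => if x i then eval t1 x else eval t0 x

/-- Number of queries made on input `x`. -/
def cost {n : ℕ} : DTree n → (Fin n → Bool) → ℕ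
  | leaf _, _ => 0
  | node i t0 t1, x => 1 + (if x i then cost t1 x else cost t0 x)

/-- Depth of a decision tree. -/
def depth {n : ℕ} : DTree n → ℕ
  | leaf _ => 0
  | node _ t0 t1 => 1 + max (depth t0) (depth t1)

end DTree

/-- `T` computes `f` with zero error. -/
def Computes {n : ℕ} (T : DTree n) (f : (Fin n → Bool) → Bool) : Prop :=
  ∀ x, T.eval x = f x

/-- Average cost of a decision tree under the uniform distribution. -/
noncomputable def avgCost {n : ℕ} (T : DTree n) : ℝ :=
  (∑ x : Fin n → Bool, (T.cost x : ℝ)) / 2 ^ n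

/-- Average-case deterministic query complexity under the uniform distribution. -/
noncomputable def Dave {n : ℕ} (f : (Fin n → Bool) → Bool) : ℝ :=
  sInf {c : ℝ | ∃ T : DTree n, Computes T f ∧ avgCost T = c}

/-- Worst-case deterministic query complexity. -/
noncomputable def Dworst {n : ℕ} (f : (Fin n → Bool) → Bool) : ℕ :=
  sInf {d : ℕ | ∃ T : DTree n, Computes T f ∧ T.depth = d}

/-- The weight of a boolean function: the number of inputs mapped to `true`. -/
def wt {n : ℕ} (f : (Fin n → Bool) → Bool) : ℕ :=
  (Finset.univ.filter fun x : Fin n → Bool => f x = true).card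

/-- `S` is a certificate of `f` on input `x`. -/
def IsCert {n : ℕ} (f : (Fin n → Bool) → Bool) (x : Fin n → Bool) (S : Finset (Fin n)) : Prop :=
  ∀ y : Fin n → Bool, (∀ i ∈ S, y i = x i) → f y = f x

/-- Certificate complexity of `f` on input `x`. -/
noncomputable def certC {n : ℕ} (f : (Fin n → Bool) → Bool) (x : Fin n → Bool) : ℕ :=
  sInf {k : ℕ | ∃ S : Finset (Fin n), IsCert f x S ∧ S.card = k}

/-- The weight of the subfunction `f|ρ`, where `ρ : Fin n → Option Bool` is a restriction:
the number of inputs consistent with `ρ` on which `f` outputs `true`. -/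
def wtR {n : ℕ} (f : (Fin n → Bool) → Bool) (ρ : Fin n → Option Bool) : ℕ :=
  (Finset.univ.filter fun x : Fin n → Bool =>
    f x = true ∧ ∀ i : Fin n, ∀ b : Bool, ρ i = some b → x i = b).card

/-- Number of coordinates fixed by a restriction. -/
def suppCard {n : ℕ} (ρ : Fin n → Option Bool) : ℕ :=
  (Finset.univ.filter fun i : Fin n => (ρ i).isSome).card

/-- The restriction given by the first `j` steps of a decision-tree path `L`. -/
def PathRho {n : ℕ} (L : List (Fin n × Bool)) (j : ℕ) : Fin n → Option Bool :=
  fun i => (L.take j).lookup i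

/-- The path `L` is `δ`-parity with respect to `f`. -/
def DeltaParityPath {n : ℕ} (f : (Fin n → Bool) → Bool) (δ : ℝ)
    (L : List (Fin n × Bool)) : Prop :=
  ∀ j : ℕ, 1 ≤ j → j ≤ L.length →
    (1/2) * (1 - δ) * (wtR f (PathRho L (j-1)) : ℝ) ≤ (wtR f (PathRho L j) : ℝ) ∧
    (wtR f (PathRho L j) : ℝ) ≤ (1/2) * (1 + δ) * (wtR f (PathRho L (j-1)) : ℝ)

/-- `f` is a `(t,δ)`-parity function: every path of length at most `t` is δ-parity. -/
def ParityFun {n : ℕ} (f : (Fin n → Bool) → Bool) (t : ℕ) (δ : ℝ) : Prop :=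
  ∀ L : List (Fin n × Bool), (L.map Prod.fst).Nodup → L.length ≤ t → DeltaParityPath f δ L

/-- The subfunction `f|ρ`, viewed as a function on the full cube. -/
def restrictFun {n : ℕ} (f : (Fin n → Bool) → Bool) (ρ : Fin n → Option Bool) :
    (Fin n → Bool) → Bool :=
  fun x => f fun i => (ρ i).getD (x i)

/-- Probability mass of the restriction `ρ` under the `p`-random restriction `R_p`. -/
noncomputable def rpMass {n : ℕ} (p : ℝ) (ρ : Fin n → Option Bool) : ℝ :=
  ∏ i : Fin n, if (ρ i).isSome then (1 - p) / 2 else p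

/-- `f` is `λ`-critical. -/
def IsCritical {n : ℕ} (lam : ℝ) (f : (Fin n → Bool) → Bool) : Prop :=
  ∀ p : ℝ, 0 ≤ p → p ≤ 1 → ∀ t : ℕ,
    (∑ ρ : Fin n → Option Bool,
      if t ≤ Dworst (restrictFun f ρ) then rpMass p ρ else 0) ≤ (p * lam) ^ t


namespace Stmt12Aux

open Finset

variable {n : ℕ}

lemma cost_le_depth (T : DTree n) (x : Fin n → Bool) : T.cost x ≤ T.depth := by
  induction T with
  | leaf b => simp [DTree.cost, DTree.depth]
  | node i t0 t1 h0 h1 =>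
    simp only [DTree.cost, DTree.depth]
    cases x i <;> simp only [if_true, if_false, Bool.false_eq_true] <;> omega

/-- A full tree querying all variables in `l`, starting from partial restriction `ρ`. -/
def buildT (f : (Fin n → Bool) → Bool) : List (Fin n) → (Fin n → Option Bool) → DTree n
  | [], ρ => DTree.leaf (f fun i => (ρ i).getD false)
  | i :: l, ρ => DTree.node i (buildT f l (Function.update ρ i (some false)))
      (buildT f l (Function.update ρ i (some true)))

lemma depth_buildT (f : (Fin n → Bool) → Bool) (l : List (Fin n)) (ρ : Fin n → Option Bool) :
    (buildT f l ρ).depth = l.length := by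
  induction l generalizing ρ with
  | nil => rfl
  | cons i l ih => simp [buildT, DTree.depth, ih, Nat.add_comm]

lemma eval_buildT (f : (Fin n → Bool) → Bool) (l : List (Fin n)) (ρ : Fin n → Option Bool)
    (x : Fin n → Bool) (hcons : ∀ i b, ρ i = some b → x i = b)
    (hcov : ∀ i, i ∈ l ∨ (ρ i).isSome) :
    (buildT f l ρ).eval x = f x := by
  induction l generalizing ρ with
  | nil =>
    simp only [buildT, DTree.eval]
    congr 1
    funext i
    rcases hcov i with h | h
    · exact absurd h List.not_mem_nil
    · rcases Option.isSome_iff_exists.mp h with ⟨b, hb⟩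
      rw [hb, Option.getD_some, hcons i b hb]
  | cons i l ih =>
    simp only [buildT, DTree.eval]
    have key : ∀ b : Bool, x i = b →
        (buildT f l (Function.update ρ i (some b))).eval x = f x := by
      intro b hb
      apply ih
      · intro j c hj
        by_cases hji : j = i
        · subst hji
          rw [Function.update_self] at hj
          rw [hb]; exact (Option.some_inj.mp hj).symm ▸ rfl
        · rw [Function.update_of_ne hji] at hj
          exact hcons j c hj
      · intro j
        by_cases hji : j = i
        · subst hji; right; rw [Function.update_self]; rfl
        · rcases hcov j with h | h
          · rcases List.mem_cons.mp h with h' | h'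
            · exact absurd h' hji
            · exact Or.inl h'
          · right; rwa [Function.update_of_ne hji]
    cases hx : x i
    · simp only [if_false, Bool.false_eq_true]; exact key false hx
    · simp only [if_true]; exact key true hx

lemma exists_computes (f : (Fin n → Bool) → Bool) :
    ∃ T : DTree n, Computes T f ∧ T.depth = n := by
  refine ⟨buildT f (List.finRange n) (fun _ => none), ?_, ?_⟩
  · intro x
    apply eval_buildT
    · intro i b h; simp at h
    · intro i; exact Or.inl (List.mem_finRange i)
  · rw [depth_buildT, List.length_finRange]

lemma exists_opt (f : (Fin n → Bool) → Bool) :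
    ∃ T : DTree n, Computes T f ∧ T.depth = Dworst f := by
  have hne : {d : ℕ | ∃ T : DTree n, Computes T f ∧ T.depth = d}.Nonempty := by
    obtain ⟨T, hT, hd⟩ := exists_computes f
    exact ⟨n, T, hT, hd⟩
  exact Nat.sInf_mem hne

lemma dworst_le (f : (Fin n → Bool) → Bool) : Dworst f ≤ n := by
  obtain ⟨T, hT, hd⟩ := exists_computes f
  exact Nat.sInf_le ⟨T, hT, hd⟩

noncomputable def optT (f : (Fin n → Bool) → Bool) : DTree n := (exists_opt f).choose

lemma optT_computes (f : (Fin n → Bool) → Bool) : Computes (optT f) f :=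
  (exists_opt f).choose_spec.1

lemma optT_depth (f : (Fin n → Bool) → Bool) : (optT f).depth = Dworst f :=
  (exists_opt f).choose_spec.2


/-- Tree querying all of `l`, then running an optimal tree for the restriction. -/
noncomputable def mainB (f : (Fin n → Bool) → Bool) :
    List (Fin n) → (Fin n → Option Bool) → DTree n
  | [], ρ => optT (restrictFun f ρ)
  | i :: l, ρ => DTree.node i (mainB f l (Function.update ρ i (some false)))
      (mainB f l (Function.update ρ i (some true)))

lemma eval_mainB (f : (Fin n → Bool) → Bool) (l : List (Fin n)) (ρ : Fin n → Option Bool)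
    (x : Fin n → Bool) (hcons : ∀ i b, ρ i = some b → x i = b) :
    (mainB f l ρ).eval x = f x := by
  induction l generalizing ρ with
  | nil =>
    simp only [mainB]
    rw [optT_computes (restrictFun f ρ) x]
    unfold restrictFun
    congr 1
    funext i
    cases hi : ρ i with
    | none => rfl
    | some b => rw [Option.getD_some, hcons i b hi]
  | cons i l ih =>
    simp only [mainB, DTree.eval]
    have key : ∀ b : Bool, x i = b →
        (mainB f l (Function.update ρ i (some b))).eval x = f x := by
      intro b hb
      apply ih
      intro j c hj
      by_cases hji : j = i
      · subst hji
        rw [Function.update_self] at hj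
        rw [hb]; exact (Option.some_inj.mp hj).symm ▸ rfl
      · rw [Function.update_of_ne hji] at hj
        exact hcons j c hj
    cases hx : x i
    · simp only [if_false, Bool.false_eq_true]; exact key false hx
    · simp only [if_true]; exact key true hx

def setAll (l : List (Fin n)) (x : Fin n → Bool) (ρ : Fin n → Option Bool) :
    Fin n → Option Bool :=
  fun i => if i ∈ l then some (x i) else ρ i

lemma setAll_update (l : List (Fin n)) (i : Fin n) (x : Fin n → Bool)
    (ρ : Fin n → Option Bool) :
    setAll l x (Function.update ρ i (some (x i))) = setAll (i :: l) x ρ := by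
  funext j
  simp only [setAll, List.mem_cons]
  by_cases hl : j ∈ l
  · simp [hl]
  · by_cases hji : j = i
    · subst hji; simp [hl, Function.update_self]
    · simp [hl, hji, Function.update_of_ne hji]

lemma cost_mainB (f : (Fin n → Bool) → Bool) (l : List (Fin n)) (ρ : Fin n → Option Bool)
    (x : Fin n → Bool) :
    (mainB f l ρ).cost x ≤ l.length + Dworst (restrictFun f (setAll l x ρ)) := by
  induction l generalizing ρ with
  | nil =>
    simp only [mainB, List.length_nil, Nat.zero_add]
    have h1 := cost_le_depth (optT (restrictFun f ρ)) x
    rw [optT_depth] at h1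
    have : setAll [] x ρ = ρ := by funext j; simp [setAll]
    rw [this]; exact h1
  | cons i l ih =>
    simp only [mainB, DTree.cost, List.length_cons]
    have key : ∀ b : Bool, x i = b →
        1 + (mainB f l (Function.update ρ i (some b))).cost x ≤
          l.length + 1 + Dworst (restrictFun f (setAll (i :: l) x ρ)) := by
      intro b hb
      have := ih (Function.update ρ i (some (x i)))
      rw [setAll_update] at this
      rw [← hb]; omega
    cases hx : x i
    · simpa only [if_false, Bool.false_eq_true] using key false hx
    · simpa only [if_true] using key true hx

lemma avgCost_nonneg (T : DTree n) : 0 ≤ avgCost T := by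
  unfold avgCost
  apply div_nonneg
  · exact Finset.sum_nonneg fun x _ => Nat.cast_nonneg _
  · positivity

lemma dave_le_avgCost (f : (Fin n → Bool) → Bool) (T : DTree n) (h : Computes T f) :
    Dave f ≤ avgCost T := by
  apply csInf_le
  · refine ⟨0, fun c hc => ?_⟩
    obtain ⟨T', _, rfl⟩ := hc
    exact avgCost_nonneg T'
  · exact ⟨T, h, rfl⟩


def mk (ab : Bool × Bool) : Option Bool := if ab.1 then none else some ab.2

noncomputable def wf (p : ℝ) (ab : Bool × Bool) : ℝ := (if ab.1 then p else 1 - p) / 2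

lemma sum_fn {β : Type} [Fintype β] [DecidableEq β] (h : Fin n → β → ℝ) :
    ∑ g : Fin n → β, ∏ i, h i (g i) = ∏ i, ∑ b, h i b := by
  rw [Finset.prod_univ_sum, Fintype.piFinset_univ]

lemma coord_sum (p : ℝ) (o : Option Bool) :
    ∑ ab : Bool × Bool, (if o = mk ab then wf p ab else 0) =
      if o.isSome then (1 - p) / 2 else p := by
  cases o with
  | none => simp [Fintype.sum_prod_type, mk, wf]
  | some b => cases b <;> simp [Fintype.sum_prod_type, mk, wf]

lemma fiber_mass (p : ℝ) (ρ : Fin n → Option Bool) :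
    ∑ g : Fin n → Bool × Bool,
      (if ρ = (fun i => mk (g i)) then ∏ i, wf p (g i) else 0) = rpMass p ρ := by
  have h1 : ∀ g : Fin n → Bool × Bool,
      (if ρ = (fun i => mk (g i)) then ∏ i, wf p (g i) else 0) =
      ∏ i, (if ρ i = mk (g i) then wf p (g i) else 0) := by
    intro g
    by_cases h : ρ = fun i => mk (g i)
    · rw [if_pos h]
      exact Finset.prod_congr rfl fun i _ => (if_pos (congrFun h i)).symm
    · rw [if_neg h]
      obtain ⟨i, hi⟩ := Function.ne_iff.mp h
      exact (Finset.prod_eq_zero (mem_univ i) (show (if ρ i = mk (g i) then wf p (g i) else 0) = 0 from if_neg hi)).symm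
  rw [Finset.sum_congr rfl fun g _ => h1 g,
    sum_fn (fun i ab => if ρ i = mk ab then wf p ab else 0)]
  exact Finset.prod_congr rfl fun i _ => coord_sum p (ρ i)

lemma sum_group (p : ℝ) (G : (Fin n → Option Bool) → ℝ) :
    ∑ g : Fin n → Bool × Bool, (∏ i, wf p (g i)) * G (fun i => mk (g i)) =
    ∑ ρ : Fin n → Option Bool, rpMass p ρ * G ρ := by
  have h1 : ∀ g : Fin n → Bool × Bool,
      (∏ i, wf p (g i)) * G (fun i => mk (g i)) =
      ∑ ρ : Fin n → Option Bool,
        if ρ = (fun i => mk (g i)) then (∏ i, wf p (g i)) * G ρ else 0 := by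
    intro g
    rw [Finset.sum_ite_eq' Finset.univ (fun i => mk (g i))
      (fun ρ => (∏ i, wf p (g i)) * G ρ)]
    simp
  rw [Finset.sum_congr rfl fun g _ => h1 g, Finset.sum_comm]
  apply Finset.sum_congr rfl
  intro ρ _
  have h2 : ∀ g : Fin n → Bool × Bool,
      (if ρ = (fun i => mk (g i)) then (∏ i, wf p (g i)) * G ρ else 0) =
      (if ρ = (fun i => mk (g i)) then (∏ i, wf p (g i)) else 0) * G ρ := by
    intro g; split <;> simp
  rw [Finset.sum_congr rfl fun g _ => h2 g, ← Finset.sum_mul, fiber_mass]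





lemma sum_wf_one (p : ℝ) : ∑ ab : Bool × Bool, wf p ab = 1 := by
  simp [Fintype.sum_prod_type, wf]

lemma sum_W_one (p : ℝ) : ∑ g : Fin n → Bool × Bool, ∏ i, wf p (g i) = 1 := by
  rw [sum_fn (fun _ ab => wf p ab)]
  simp [sum_wf_one]

lemma wf_nonneg (p : ℝ) (hp0 : 0 ≤ p) (hp1 : p ≤ 1) (ab : Bool × Bool) : 0 ≤ wf p ab := by
  unfold wf; split <;> [positivity; (apply div_nonneg <;> linarith)]

lemma pair_sum (F : (Fin n → Bool × Bool) → ℝ) :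
    ∑ s : Fin n → Bool, ∑ x : Fin n → Bool, F (fun i => (s i, x i)) =
    ∑ g : Fin n → Bool × Bool, F g := by
  rw [← Fintype.sum_prod_type (fun q : (Fin n → Bool) × (Fin n → Bool) =>
    F (fun i => (q.1 i, q.2 i)))]
  exact Fintype.sum_bijective (Equiv.arrowProdEquivProdArrow (Fin n) (fun _ => Bool) (fun _ => Bool)).symm
    (Equiv.bijective _) _ _ (fun q => rfl)

/-- weight of a free-set indicator `s`. -/
noncomputable def ws2 (p : ℝ) (s : Fin n → Bool) : ℝ := ∏ i, (if s i then p else 1 - p)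

lemma ws2_nonneg (p : ℝ) (hp0 : 0 ≤ p) (hp1 : p ≤ 1) (s : Fin n → Bool) : 0 ≤ ws2 p s :=
  Finset.prod_nonneg fun i _ => by split <;> linarith

lemma sum_ws2 (p : ℝ) : ∑ s : Fin n → Bool, ws2 p s = 1 := by
  unfold ws2
  rw [sum_fn (n := n) (β := Bool) (fun _ (b : Bool) => if b then p else 1 - p)]
  have : (∑ b : Bool, if b then p else 1 - p) = 1 := by simp
  simp [this]

lemma ws2_div (p : ℝ) (s x : Fin n → Bool) :
    (∏ i, wf p (s i, x i)) = ws2 p s / 2 ^ n := by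
  unfold wf ws2
  rw [Finset.prod_div_distrib]
  congr 1
  rw [Finset.prod_const]
  simp

/-- number of fixed coordinates -/
def cntF (s : Fin n → Bool) : ℕ := (Finset.univ.filter fun i => s i = false).card

lemma sum_ws2_cntF (p : ℝ) : ∑ s : Fin n → Bool, ws2 p s * cntF s = n * (1 - p) := by
  have hc : ∀ s : Fin n → Bool, (cntF s : ℝ) = ∑ i : Fin n, (if s i = false then (1:ℝ) else 0) := by
    intro s
    rw [cntF, Finset.card_filter]
    push_cast
    rfl
  have key : ∀ i : Fin n, ∑ s : Fin n → Bool, ws2 p s * (if s i = false then (1:ℝ) else 0)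
      = 1 - p := by
    intro i
    have h1 : ∀ s : Fin n → Bool, ws2 p s * (if s i = false then (1:ℝ) else 0) =
        ∏ j, ((if s j then p else 1 - p) * (if j = i then (if s j = false then 1 else 0) else 1)) := by
      intro s
      rw [Finset.prod_mul_distrib, Finset.prod_ite_eq' Finset.univ i
        (fun j => if s j = false then (1:ℝ) else 0)]
      simp [ws2]
    rw [Finset.sum_congr rfl fun s _ => h1 s,
      sum_fn (fun j b => (if b then p else 1 - p) * (if j = i then (if b = false then (1:ℝ) else 0) else 1))]
    have h2 : ∀ j : Fin n,
        (∑ b : Bool, (if b then p else 1 - p) * (if j = i then (if b = false then (1:ℝ) else 0) else 1))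
        = if j = i then 1 - p else 1 := by
      intro j
      by_cases hj : j = i <;> simp [hj] <;> ring
    rw [Finset.prod_congr rfl fun j _ => h2 j, Finset.prod_ite_eq' Finset.univ i (fun _ => 1 - p)]
    simp
  calc ∑ s : Fin n → Bool, ws2 p s * cntF s
      = ∑ s : Fin n → Bool, ∑ i : Fin n, ws2 p s * (if s i = false then (1:ℝ) else 0) := by
        apply Finset.sum_congr rfl; intro s _; rw [hc, Finset.mul_sum]
    _ = ∑ i : Fin n, ∑ s : Fin n → Bool, ws2 p s * (if s i = false then (1:ℝ) else 0) :=
        Finset.sum_comm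
    _ = ∑ i : Fin n, (1 - p) := Finset.sum_congr rfl fun i _ => key i
    _ = n * (1 - p) := by rw [Finset.sum_const]; simp [mul_comm]

lemma geom_bound (q : ℝ) (hq0 : 0 ≤ q) (hq1 : q < 1) :
    ∑ t ∈ Finset.Icc 1 n, q ^ t ≤ q / (1 - q) := by
  have h1 : ∑ t ∈ Finset.Icc 1 n, q ^ t = q * ∑ t ∈ Finset.range n, q ^ t := by
    rw [← Finset.Ico_add_one_right_eq_Icc, Finset.sum_Ico_eq_sum_range, Finset.mul_sum]
    apply Finset.sum_congr (by norm_num) fun t _ => by rw [pow_add, pow_one]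
  have h2 : ∑ t ∈ Finset.range n, q ^ t ≤ 1 / (1 - q) := by
    rw [geom_sum_eq (by intro h; rw [h] at hq1; linarith) n]
    have hpos : (0:ℝ) < 1 - q := by linarith
    have hne : q - 1 ≠ 0 := by intro h; rw [sub_eq_zero] at h; rw [h] at hq1; linarith
    have hne' : (1:ℝ) - q ≠ 0 := by linarith
    have heq : (q ^ n - 1) / (q - 1) = (1 - q ^ n) / (1 - q) := by
      field_simp
      ring
    rw [heq, div_le_div_iff₀ hpos hpos]
    have : 0 ≤ q ^ n := pow_nonneg hq0 n
    nlinarith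
  rw [h1, div_eq_mul_one_div]
  exact mul_le_mul_of_nonneg_left h2 hq0


lemma dwsum_le (f : (Fin n → Bool) → Bool) (p lam : ℝ) (hp0 : 0 ≤ p) (hp1 : p ≤ 1)
    (hc : IsCritical lam f) :
    ∑ ρ : Fin n → Option Bool, rpMass p ρ * (Dworst (restrictFun f ρ) : ℝ) ≤
      ∑ t ∈ Finset.Icc 1 n, (p * lam) ^ t := by
  have hcast : ∀ ρ : Fin n → Option Bool, (Dworst (restrictFun f ρ) : ℝ) =
      ∑ t ∈ Finset.Icc 1 n, (if t ≤ Dworst (restrictFun f ρ) then (1:ℝ) else 0) := by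
    intro ρ
    have hD := dworst_le (restrictFun f ρ)
    have hfil : (Finset.Icc 1 n).filter (fun t => t ≤ Dworst (restrictFun f ρ)) =
        Finset.Icc 1 (Dworst (restrictFun f ρ)) := by
      ext t; simp only [Finset.mem_filter, Finset.mem_Icc]; omega
    rw [Finset.sum_boole, hfil, Nat.card_Icc]
    simp
  calc ∑ ρ : Fin n → Option Bool, rpMass p ρ * (Dworst (restrictFun f ρ) : ℝ)
      = ∑ ρ : Fin n → Option Bool, ∑ t ∈ Finset.Icc 1 n,
          (if t ≤ Dworst (restrictFun f ρ) then rpMass p ρ else 0) := by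
        apply Finset.sum_congr rfl; intro ρ _
        rw [hcast ρ, Finset.mul_sum]
        apply Finset.sum_congr rfl; intro t _
        split <;> simp
    _ = ∑ t ∈ Finset.Icc 1 n, ∑ ρ : Fin n → Option Bool,
          (if t ≤ Dworst (restrictFun f ρ) then rpMass p ρ else 0) := Finset.sum_comm
    _ ≤ ∑ t ∈ Finset.Icc 1 n, (p * lam) ^ t :=
        Finset.sum_le_sum fun t _ => hc p hp0 hp1 t

def rsx (s x : Fin n → Bool) : Fin n → Option Bool := fun i => mk (s i, x i)

noncomputable def boundS (f : (Fin n → Bool) → Bool) (s : Fin n → Bool) : ℝ :=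
  (cntF s : ℝ) + (∑ x : Fin n → Bool, (Dworst (restrictFun f (rsx s x)) : ℝ)) / 2 ^ n

lemma card_cube : (Fintype.card (Fin n → Bool) : ℝ) = 2 ^ n := by
  simp [Fintype.card_fun]

lemma dave_le_boundS (f : (Fin n → Bool) → Bool) (s : Fin n → Bool) :
    Dave f ≤ boundS f s := by
  set l := (Finset.univ.filter fun i : Fin n => s i = false).toList with hl
  set T := mainB f l (fun _ => none) with hT
  have hcomp : Computes T f := by
    intro x
    exact eval_mainB f l (fun _ => none) x (fun i b h => by cases h)
  have hlen : l.length = cntF s := by rw [hl, Finset.length_toList]; rfl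
  have hset : ∀ x : Fin n → Bool, setAll l x (fun _ => none) = rsx s x := by
    intro x; funext i
    have hmem : i ∈ l ↔ s i = false := by
      rw [hl]; simp [Finset.mem_toList, Finset.mem_filter]
    simp only [setAll, rsx, mk]
    cases hs : s i with
    | false => rw [if_pos (hmem.mpr hs)]; simp
    | true =>
      rw [if_neg (fun h => by simp [hmem.mp h] at hs)]
      simp
  have hcost : ∀ x : Fin n → Bool,
      (T.cost x : ℝ) ≤ (cntF s : ℝ) + (Dworst (restrictFun f (rsx s x)) : ℝ) := by
    intro x
    have := cost_mainB f l (fun _ => none) x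
    rw [hset x, hlen] at this
    exact_mod_cast this
  have hsum : (∑ x : Fin n → Bool, (T.cost x : ℝ)) ≤
      2 ^ n * (cntF s : ℝ) + ∑ x : Fin n → Bool, (Dworst (restrictFun f (rsx s x)) : ℝ) := by
    calc (∑ x : Fin n → Bool, (T.cost x : ℝ))
        ≤ ∑ x : Fin n → Bool, ((cntF s : ℝ) + (Dworst (restrictFun f (rsx s x)) : ℝ)) :=
          Finset.sum_le_sum fun x _ => hcost x
      _ = 2 ^ n * (cntF s : ℝ) + ∑ x : Fin n → Bool, (Dworst (restrictFun f (rsx s x)) : ℝ) := by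
          rw [Finset.sum_add_distrib, Finset.sum_const, nsmul_eq_mul, Finset.card_univ, card_cube]
  refine le_trans (dave_le_avgCost f T hcomp) ?_
  unfold avgCost boundS
  rw [div_le_iff₀ (by positivity : (0:ℝ) < 2 ^ n)]
  have expand : ((cntF s : ℝ) +
      (∑ x : Fin n → Bool, (Dworst (restrictFun f (rsx s x)) : ℝ)) / 2 ^ n) * 2 ^ n =
      2 ^ n * (cntF s : ℝ) + ∑ x : Fin n → Bool, (Dworst (restrictFun f (rsx s x)) : ℝ) := by
    field_simp
  rw [expand]
  exact hsum

lemma weighted (f : (Fin n → Bool) → Bool) (p : ℝ) :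
    ∑ s : Fin n → Bool, ws2 p s * boundS f s =
      n * (1 - p) + ∑ ρ : Fin n → Option Bool,
        rpMass p ρ * (Dworst (restrictFun f ρ) : ℝ) := by
  have expand : ∀ s : Fin n → Bool, ws2 p s * boundS f s =
      ws2 p s * (cntF s : ℝ) + ∑ x : Fin n → Bool,
        (∏ i, wf p (s i, x i)) * (Dworst (restrictFun f (rsx s x)) : ℝ) := by
    intro s
    unfold boundS
    rw [mul_add]
    congr 1
    have hx : ∀ x : Fin n → Bool,
        (∏ i, wf p (s i, x i)) * (Dworst (restrictFun f (rsx s x)) : ℝ) =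
        (ws2 p s / 2 ^ n) * (Dworst (restrictFun f (rsx s x)) : ℝ) := by
      intro x; rw [ws2_div p s x]
    rw [Finset.sum_congr rfl fun x _ => hx x, ← Finset.mul_sum]
    ring
  rw [Finset.sum_congr rfl fun s _ => expand s, Finset.sum_add_distrib, sum_ws2_cntF]
  congr 1
  have h := pair_sum (n := n) (fun g : Fin n → Bool × Bool =>
    (∏ i, wf p (g i)) * (Dworst (restrictFun f (fun i => mk (g i))) : ℝ))
  calc ∑ s : Fin n → Bool, ∑ x : Fin n → Bool,
        (∏ i, wf p (s i, x i)) * (Dworst (restrictFun f (rsx s x)) : ℝ)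
      = ∑ g : Fin n → Bool × Bool,
        (∏ i, wf p (g i)) * (Dworst (restrictFun f (fun i => mk (g i))) : ℝ) := h
    _ = ∑ ρ : Fin n → Option Bool, rpMass p ρ * (Dworst (restrictFun f ρ) : ℝ) :=
        sum_group p (fun ρ => (Dworst (restrictFun f ρ) : ℝ))

end Stmt12Aux

theorem stmt12 (n : ℕ) (lam : ℝ) (f : (Fin n → Bool) → Bool)
    (hlam : 1 ≤ lam) (hn : lam ≤ n) (hc : IsCritical lam f) :
    Dave f ≤ n * (1 - 1 / lam) + 2 * Real.sqrt (n / lam) := by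
  classical
  have hlam0 : (0:ℝ) < lam := by linarith
  have hn1 : (1:ℝ) ≤ (n:ℝ) := le_trans hlam hn
  have hn0 : (0:ℝ) < n := by linarith
  set r := Real.sqrt (lam / n) with hrdef
  set rinv := Real.sqrt ((n : ℝ) / lam) with hrinvdef
  have hr0 : 0 < r := Real.sqrt_pos.mpr (div_pos hlam0 hn0)
  have hr1 : r ≤ 1 := by
    have h := Real.sqrt_le_sqrt ((div_le_one hn0).mpr hn)
    rwa [Real.sqrt_one] at h
  set p := (1 - r) / lam with hpdef
  have hp0 : 0 ≤ p := div_nonneg (by linarith) hlam0.le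
  have hp1 : p ≤ 1 := by rw [hpdef, div_le_one hlam0]; linarith
  have hq : p * lam = 1 - r := by rw [hpdef, div_mul_cancel₀ _ hlam0.ne']
  have hrr : r * rinv = 1 := by
    rw [hrdef, hrinvdef, ← Real.sqrt_mul (div_nonneg hlam0.le hn0.le),
      show lam / (n:ℝ) * ((n:ℝ) / lam) = 1 by field_simp, Real.sqrt_one]
  have hrinv2 : rinv * rinv = (n:ℝ) / lam := Real.mul_self_sqrt (div_nonneg hn0.le hlam0.le)
  have e1 : (n:ℝ) / lam * r = rinv := by
    calc (n:ℝ)/lam * r = rinv * rinv * r := by rw [hrinv2]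
      _ = rinv * (r * rinv) := by ring
      _ = rinv := by rw [hrr, mul_one]
  have e2 : (1 - r) / r = rinv - 1 := by
    rw [div_eq_iff hr0.ne']
    linear_combination (-1 : ℝ) * hrr
  have hdave : ∀ s : Fin n → Bool, Dave f ≤ Stmt12Aux.boundS f s := Stmt12Aux.dave_le_boundS f
  have chain : Dave f ≤ (n:ℝ) * (1 - p) + (1 - r) / r := by
    calc Dave f = ∑ s : Fin n → Bool, Stmt12Aux.ws2 p s * Dave f := by
          rw [← Finset.sum_mul, Stmt12Aux.sum_ws2, one_mul]
      _ ≤ ∑ s : Fin n → Bool, Stmt12Aux.ws2 p s * Stmt12Aux.boundS f s :=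
          Finset.sum_le_sum fun s _ =>
            mul_le_mul_of_nonneg_left (hdave s) (Stmt12Aux.ws2_nonneg p hp0 hp1 s)
      _ = (n:ℝ) * (1 - p) + ∑ ρ : Fin n → Option Bool,
            rpMass p ρ * (Dworst (restrictFun f ρ) : ℝ) := Stmt12Aux.weighted f p
      _ ≤ (n:ℝ) * (1 - p) + ∑ t ∈ Finset.Icc 1 n, (p * lam) ^ t :=
          add_le_add_right (Stmt12Aux.dwsum_le f p lam hp0 hp1 hc) _
      _ ≤ (n:ℝ) * (1 - p) + (p * lam) / (1 - p * lam) :=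
          add_le_add_right (Stmt12Aux.geom_bound (p * lam)
            (by rw [hq]; linarith) (by rw [hq]; linarith)) _
      _ = (n:ℝ) * (1 - p) + (1 - r) / r := by rw [hq, show (1 - (1 - r)) = r by ring]
  refine le_trans chain ?_
  rw [e2, hpdef, show (n:ℝ) * (1 - (1 - r)/lam) = (n:ℝ) - (n:ℝ)/lam + ((n:ℝ)/lam) * r by ring,
    e1, show (n:ℝ) * (1 - 1/lam) = (n:ℝ) - (n:ℝ)/lam by ring]
  linarith
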